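/- Soundness and completeness of KDC: a modal formula is a theorem of the Hilbert system KDC if and only if it is true at every world of every classical Kripke model whose accessibility relation is serial (every world has at least one successor) and which satisfies the C-propagation condition. -/

import Mathlib

/-- Modal formulas: atoms, negation, conjunction, disjunction, box. -/
inductive Formula : Type where
  | atom : ℕ → Formula
  | neg : Formula → Formula
  | and : Formula → Formula → Formula
  | or : Formula → Formula → Formula
  | box : Formula → Formula

/-- φ → ψ abbreviates ¬φ ∨ ψ. -/
def Formula.imp (φ ψ : Formula) : Formula := .or (.neg φ) ψ

/-- Classical propositional evaluation treating boxed subformulas atomically. -/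
def evalT (v : Formula → Bool) : Formula → Bool
  | .atom n => v (.atom n)
  | .neg φ => ! evalT v φ
  | .and φ ψ => evalT v φ && evalT v ψ
  | .or φ ψ => evalT v φ || evalT v ψ
  | .box φ => v (.box φ)

/-- A classical propositional tautology (boxed subformulas treated as atoms). -/
def Tautology (φ : Formula) : Prop := ∀ v : Formula → Bool, evalT v φ = true


/-- The Hilbert system KDC: classical tautologies, schemas K, C, D,
closed under modus ponens and necessitation. -/
inductive KDC : Formula → Prop where
  | taut {φ : Formula} : Tautology φ → KDC φ
  | axK (φ ψ : Formula) :
      KDC (Formula.imp (.box (Formula.imp φ ψ)) (Formula.imp (.box φ) (.box ψ)))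
  | axC (φ : Formula) : KDC (Formula.imp φ (.box φ))
  | axD (φ : Formula) : KDC (Formula.imp (.box φ) (.neg (.box (.neg φ))))
  | mp {φ ψ : Formula} : KDC (Formula.imp φ ψ) → KDC φ → KDC ψ
  | nec {φ : Formula} : KDC φ → KDC (.box φ)

/-- Kripke satisfaction. -/
def Sat {W : Type} (R : W → W → Prop) (V : W → ℕ → Bool) : W → Formula → Prop
  | w, .atom n => V w n = true
  | w, .neg φ => ¬ Sat R V w φ
  | w, .and φ ψ => Sat R V w φ ∧ Sat R V w ψ
  | w, .or φ ψ => Sat R V w φ ∨ Sat R V w ψ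
  | w, .box φ => ∀ w', R w w' → Sat R V w' φ

-- ============ auxiliary ============

lemma Sat_imp {W : Type} (R : W → W → Prop) (V : W → ℕ → Bool) (w : W) (φ ψ : Formula) :
    Sat R V w (Formula.imp φ ψ) ↔ (Sat R V w φ → Sat R V w ψ) := by
  simp only [Formula.imp, Sat]
  tauto

open Classical in
lemma evalT_sat {W : Type} (R : W → W → Prop) (V : W → ℕ → Bool) (w : W) :
    ∀ φ, evalT (fun χ => decide (Sat R V w χ)) φ = true ↔ Sat R V w φ := by
  intro φ
  induction φ with
  | atom n => simp [evalT, Sat]; exact Bool.eq_iff_iff.mpr (@decide_eq_true_iff _ (Classical.propDecidable _))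
  | neg φ ih =>
      simp only [evalT, Sat, Bool.not_eq_true']
      rw [← ih]
      simp
  | and φ ψ ih1 ih2 => simp [evalT, Sat, ih1, ih2]
  | or φ ψ ih1 ih2 => simp [evalT, Sat, ih1, ih2]
  | box φ _ => simp [evalT]

lemma KDC_sound {φ : Formula} (h : KDC φ) :
    ∀ (W : Type) (R : W → W → Prop) (V : W → ℕ → Bool),
      (∀ w : W, ∃ w' : W, R w w') →
      (∀ (ψ : Formula) (w w' : W), R w w' → Sat R V w ψ → Sat R V w' ψ) →
      ∀ w : W, Sat R V w φ := by
  induction h with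
  | @taut φ ht =>
      intro W R V _ _ w
      classical
      exact (evalT_sat R V w φ).mp (ht _)
  | axK φ ψ =>
      intro W R V _ _ w
      rw [Sat_imp]
      intro h1
      rw [Sat_imp]
      intro h2
      intro w' hw
      have := h1 w' hw
      rw [Sat_imp] at this
      exact this (h2 w' hw)
  | axC φ =>
      intro W R V _ hprop w
      rw [Sat_imp]
      intro h w' hw
      exact hprop φ w w' hw h
  | axD φ =>
      intro W R V hser _ w
      rw [Sat_imp]
      intro h
      obtain ⟨w', hw⟩ := hser w
      simp only [Sat]
      intro hall
      exact (hall w' hw) (h w' hw)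
  | mp h1 h2 ih1 ih2 =>
      intro W R V hser hprop w
      have := ih1 W R V hser hprop w
      rw [Sat_imp] at this
      exact this (ih2 W R V hser hprop w)
  | nec h ih =>
      intro W R V hser hprop w w' _
      exact ih W R V hser hprop w'

-- ============ completeness machinery ============

-- tautology schemas
lemma t_id (φ : Formula) : Tautology (.imp φ φ) := by
  intro v
  simp only [Formula.imp, evalT]
  generalize evalT v φ = a
  revert a; decide

lemma t_trans (φ ψ χ : Formula) :
    Tautology (.imp (.imp φ ψ) (.imp (.imp ψ χ) (.imp φ χ))) := by
  intro v
  simp only [Formula.imp, evalT]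
  generalize evalT v φ = a
  generalize evalT v ψ = b
  generalize evalT v χ = c
  revert a b c; decide

lemma KDC_trans {φ ψ χ : Formula} (h1 : KDC (.imp φ ψ)) (h2 : KDC (.imp ψ χ)) :
    KDC (.imp φ χ) :=
  KDC.mp (KDC.mp (KDC.taut (t_trans φ ψ χ)) h1) h2

lemma t_neg (φ ψ : Formula) :
    Tautology (.imp (.imp φ ψ) (.imp (.neg ψ) (.neg φ))) := by
  intro v
  simp only [Formula.imp, evalT]
  generalize evalT v φ = a
  generalize evalT v ψ = b
  revert a b; decide

lemma t_and (φ φ' ψ ψ' : Formula) :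
    Tautology (.imp (.imp φ φ') (.imp (.imp ψ ψ') (.imp (.and φ ψ) (.and φ' ψ')))) := by
  intro v
  simp only [Formula.imp, evalT]
  generalize evalT v φ = a
  generalize evalT v φ' = a'
  generalize evalT v ψ = b
  generalize evalT v ψ' = b'
  revert a a' b b'; decide

lemma t_or (φ φ' ψ ψ' : Formula) :
    Tautology (.imp (.imp φ φ') (.imp (.imp ψ ψ') (.imp (.or φ ψ) (.or φ' ψ')))) := by
  intro v
  simp only [Formula.imp, evalT]
  generalize evalT v φ = a
  generalize evalT v φ' = a'
  generalize evalT v ψ = b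
  generalize evalT v ψ' = b'
  revert a a' b b'; decide

lemma t_boxelim (φ : Formula) :
    Tautology (.imp (.imp (.neg φ) (.box (.neg φ)))
      (.imp (.imp (.box φ) (.neg (.box (.neg φ)))) (.imp (.box φ) φ))) := by
  intro v
  simp only [Formula.imp, evalT]
  generalize evalT v φ = a
  generalize v (Formula.box (Formula.neg φ)) = b
  generalize v (Formula.box φ) = c
  revert a b c; decide

lemma KDC_box_elim (φ : Formula) : KDC (.imp (.box φ) φ) :=
  KDC.mp (KDC.mp (KDC.taut (t_boxelim φ)) (KDC.axC (.neg φ))) (KDC.axD φ)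

/-- Erase all boxes. -/
def eraseBox : Formula → Formula
  | .atom n => .atom n
  | .neg φ => .neg (eraseBox φ)
  | .and φ ψ => .and (eraseBox φ) (eraseBox ψ)
  | .or φ ψ => .or (eraseBox φ) (eraseBox ψ)
  | .box φ => eraseBox φ

lemma erase_equiv (φ : Formula) :
    KDC (.imp φ (eraseBox φ)) ∧ KDC (.imp (eraseBox φ) φ) := by
  induction φ with
  | atom n => exact ⟨KDC.taut (t_id _), KDC.taut (t_id _)⟩
  | neg φ ih =>
      exact ⟨KDC.mp (KDC.taut (t_neg _ _)) ih.2, KDC.mp (KDC.taut (t_neg _ _)) ih.1⟩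
  | and φ ψ ih1 ih2 =>
      exact ⟨KDC.mp (KDC.mp (KDC.taut (t_and _ _ _ _)) ih1.1) ih2.1,
             KDC.mp (KDC.mp (KDC.taut (t_and _ _ _ _)) ih1.2) ih2.2⟩
  | or φ ψ ih1 ih2 =>
      exact ⟨KDC.mp (KDC.mp (KDC.taut (t_or _ _ _ _)) ih1.1) ih2.1,
             KDC.mp (KDC.mp (KDC.taut (t_or _ _ _ _)) ih1.2) ih2.2⟩
  | box φ ih =>
      exact ⟨KDC_trans (KDC_box_elim φ) ih.1, KDC_trans ih.2 (KDC.axC φ)⟩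

/-- Boolean evaluation erasing boxes. -/
def evalB (v : ℕ → Bool) : Formula → Bool
  | .atom n => v n
  | .neg φ => ! evalB v φ
  | .and φ ψ => evalB v φ && evalB v ψ
  | .or φ ψ => evalB v φ || evalB v ψ
  | .box φ => evalB v φ

lemma evalT_eraseBox (φ : Formula) (v' : Formula → Bool) :
    evalT v' (eraseBox φ) = evalB (fun n => v' (.atom n)) φ := by
  induction φ with
  | atom n => rfl
  | neg φ ih => simp [eraseBox, evalT, evalB, ih]
  | and φ ψ ih1 ih2 => simp [eraseBox, evalT, evalB, ih1, ih2]
  | or φ ψ ih1 ih2 => simp [eraseBox, evalT, evalB, ih1, ih2]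
  | box φ ih => simpa [eraseBox, evalB] using ih

lemma Sat_canonical (φ : Formula) :
    ∀ v : ℕ → Bool, Sat (fun a b => a = b) (fun w n => w n) v φ ↔ evalB v φ = true := by
  induction φ with
  | atom n => intro v; simp [Sat, evalB]
  | neg φ ih => intro v; simp [Sat, evalB, ih]
  | and φ ψ ih1 ih2 => intro v; simp [Sat, evalB, ih1, ih2]
  | or φ ψ ih1 ih2 => intro v; simp [Sat, evalB, ih1, ih2]
  | box φ ih =>
      intro v
      simp only [Sat, evalB]
      constructor
      · intro h; exact (ih v).mp (h v rfl)
      · intro h w' hw; subst hw; exact (ih v).mpr h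

/-- Soundness and completeness of KDC: a modal formula is a
theorem of KDC iff it is true at every world of every classical Kripke model
whose accessibility relation is serial and which satisfies C-propagation. -/
theorem KDC_soundness_completeness (φ : Formula) :
    KDC φ ↔
      ∀ (W : Type) (R : W → W → Prop) (V : W → ℕ → Bool),
        (∀ w : W, ∃ w' : W, R w w') →
        (∀ (ψ : Formula) (w w' : W), R w w' → Sat R V w ψ → Sat R V w' ψ) →
        ∀ w : W, Sat R V w φ := by
  constructor
  · exact fun h => KDC_sound h
  · intro H
    have hval : ∀ v : ℕ → Bool, evalB v φ = true := by
      intro v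
      have := H (ℕ → Bool) (fun a b => a = b) (fun w n => w n)
        (fun w => ⟨w, rfl⟩) (fun ψ w w' hw h => by subst hw; exact h) v
      exact (Sat_canonical φ v).mp this
    have htaut : Tautology (eraseBox φ) := by
      intro v'
      rw [evalT_eraseBox]
      exact hval _
    exact KDC.mp (erase_equiv φ).2 (KDC.taut htaut)
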